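/- Fix c₀ > 0 and ε ∈ {+1,−1}, and let (T, e₁, e₂) : ℝ → (ℝ³)³ be the unique solution of the linear ODE system T′(s) = c₀ e₁(s), e₁′(s) = −ε c₀ T(s) + (s/2) e₂(s), e₂′(s) = −(s/2) e₁(s) with initial conditions T(0) = (0,0,1), e₁(0) = (1,0,0), e₂(0) = (0,1,0). Define G(s) := 2c₀·(0,1,0) + ∫₀ˢ T(σ) dσ, and let A¹ := lim_{s→+∞} T(s), A² := lim_{s→−∞} T(s) (these limits exist). Then there is a constant C > 0 such that for all s ≥ 1, |G(s) − A¹·(s + 2ε c₀²/s) + 4c₀ e₁(s)/s²| ≤ C/|s|³, and for all s ≤ −1, |G(s) − A²·(s + 2ε c₀²/s) + 4c₀ e₁(s)/s²| ≤ C/|s|³. -/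

import Mathlib

open MeasureTheory Set Filter Topology

noncomputable section

/-- Generalized cross product `a ∧_ε b` on ℝ³ (ε = 1: Euclidean, ε = -1: hyperbolic). -/
def wedge (ε : ℝ) (a b : Fin 3 → ℝ) : Fin 3 → ℝ :=
  ![a 1 * b 2 - a 2 * b 1, a 2 * b 0 - a 0 * b 2, ε * (a 0 * b 1 - a 1 * b 0)]

/-- Generalized scalar product `a ∘_ε b` on ℝ³. -/
def circ (ε : ℝ) (a b : Fin 3 → ℝ) : ℝ :=
  a 0 * b 0 + a 1 * b 1 + ε * (a 2 * b 2)

/-- Euclidean norm on ℝ³. -/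
def norm3 (a : Fin 3 → ℝ) : ℝ := Real.sqrt (a 0 ^ 2 + a 1 ^ 2 + a 2 ^ 2)

/-- `G(s) = 2c₀·(0,1,0) + ∫₀ˢ T(σ) dσ`. -/
def Gfun (c₀ : ℝ) (T : ℝ → Fin 3 → ℝ) (s : ℝ) : Fin 3 → ℝ :=
  (2 * c₀) • ![0, 1, 0] + ∫ σ in (0:ℝ)..s, T σ

/-- The self-similar profile `X_{c₀}(s,t) = √t · G(s/√t)`. -/
def Xfun (c₀ : ℝ) (T : ℝ → Fin 3 → ℝ) (s t : ℝ) : Fin 3 → ℝ :=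
  Real.sqrt t • Gfun c₀ T (s / Real.sqrt t)

/-! ### Auxiliary lemmas -/

lemma hda_app {f : ℝ → Fin 3 → ℝ} {f' : Fin 3 → ℝ} {x : ℝ} (h : HasDerivAt f f' x) (i : Fin 3) :
    HasDerivAt (fun s => f s i) (f' i) x := by
  have := (ContinuousLinearMap.proj (R := ℝ) (φ := fun _ : Fin 3 => ℝ) i).hasFDerivAt.comp_hasDerivAt x h
  exact this

lemma hasDerivAt_const_div_pow (a : ℝ) (k : ℕ) {s : ℝ} (hs : s ≠ 0) :
    HasDerivAt (fun x : ℝ => a / x ^ k) (-(a * k) / s ^ (k+1)) s := by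
  have h1 : HasDerivAt (fun x : ℝ => x ^ k) ((k : ℝ) * s ^ (k-1)) s := hasDerivAt_pow k s
  have h2 := (h1.inv (pow_ne_zero k hs)).const_mul a
  refine h2.congr_deriv (Eq.symm ?_)
  rcases k with _ | m
  · simp
  · have hm : m + 1 - 1 = m := rfl
    rw [hm]
    field_simp
    ring

lemma integral_inv_pow_bound {C : ℝ} (hC : 0 ≤ C) {n : ℕ} (hn : 2 ≤ n) {s b : ℝ}
    (hs : 1 ≤ s) (hb : s ≤ b) :
    ∫ σ in s..b, C / σ ^ n ≤ C / s ^ (n-1) := by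
  have hn' : (2:ℝ) ≤ (n:ℝ) := by exact_mod_cast hn
  have hφ : ∀ σ ∈ Set.uIcc s b, HasDerivAt (fun x : ℝ => -(C / ((n:ℝ)-1)) / x ^ (n-1)) (C / σ ^ n) σ := by
    intro σ hσ
    rw [Set.uIcc_of_le hb] at hσ
    have hσ0 : σ ≠ 0 := by nlinarith [hσ.1]
    have := hasDerivAt_const_div_pow (-(C / ((n:ℝ)-1))) (n-1) hσ0
    convert this using 1
    have h1 : n - 1 + 1 = n := by omega
    rw [h1]
    have hne : ((n : ℝ) - 1) ≠ 0 := by linarith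
    have hcast : ((n - 1 : ℕ) : ℝ) = (n : ℝ) - 1 := by
      have : 1 ≤ n := by omega
      push_cast [this]; ring
    rw [hcast]
    field_simp
  have hint : IntervalIntegrable (fun σ => C / σ ^ n) volume s b := by
    apply ContinuousOn.intervalIntegrable
    apply ContinuousOn.div continuousOn_const (by fun_prop)
    intro σ hσ
    rw [Set.uIcc_of_le hb] at hσ
    exact pow_ne_zero _ (by nlinarith [hσ.1])
  rw [intervalIntegral.integral_eq_sub_of_hasDerivAt hφ hint]
  have hsp : (0:ℝ) < s := by linarith
  have hbp : (0:ℝ) < b := by linarith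
  have hs0 : (0:ℝ) < s ^ (n-1) := by positivity
  have hb0 : (0:ℝ) < b ^ (n-1) := by positivity
  have heq : -(C / ((n:ℝ) - 1)) / b ^ (n - 1) - -(C / ((n:ℝ) - 1)) / s ^ (n - 1)
      = C/((n:ℝ)-1)/s^(n-1) - C/((n:ℝ)-1)/b^(n-1) := by ring
  rw [heq]
  have h2 : 0 ≤ C/((n:ℝ)-1)/b^(n-1) := div_nonneg (div_nonneg hC (by linarith)) hb0.le
  have h3 : C/((n:ℝ)-1) ≤ C := div_le_self hC (by linarith)
  have h4 : C/((n:ℝ)-1)/s^(n-1) ≤ C / s^(n-1) := by gcongr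
  linarith

lemma decayTop {E : Type*} [NormedAddCommGroup E] [NormedSpace ℝ E] [CompleteSpace E]
    {f f' : ℝ → E} {L : E} {C : ℝ} {n m : ℕ} (hn : 2 ≤ n) (hm : n = m + 1)
    (hd : ∀ s, 1 ≤ s → HasDerivAt f (f' s) s)
    (hc : ContinuousOn f' (Ici 1))
    (hb : ∀ s, 1 ≤ s → ‖f' s‖ ≤ C / s ^ n)
    (hlim : Tendsto f atTop (𝓝 L)) :
    ∀ s, 1 ≤ s → ‖f s - L‖ ≤ C / s ^ m := by
  have hmn : m = n - 1 := by omega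
  subst hmn
  have hC : 0 ≤ C := by
    have h1 := hb 1 le_rfl
    have h2 := norm_nonneg (f' 1)
    simp only [one_pow, div_one] at h1
    linarith
  intro s hs
  have key : ∀ b, s ≤ b → ‖f b - f s‖ ≤ C / s ^ (n-1) := by
    intro b hbs
    have hsub : Set.uIcc s b ⊆ Ici 1 := by
      rw [Set.uIcc_of_le hbs]
      intro x hx; exact le_trans hs hx.1
    have hint : IntervalIntegrable f' volume s b :=
      (hc.mono hsub).intervalIntegrable
    have hftc : f b - f s = ∫ σ in s..b, f' σ :=
      (intervalIntegral.integral_eq_sub_of_hasDerivAt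
        (fun σ hσ => hd σ (hsub hσ)) hint).symm
    rw [hftc]
    calc ‖∫ σ in s..b, f' σ‖ ≤ ∫ σ in s..b, ‖f' σ‖ :=
          intervalIntegral.norm_integral_le_integral_norm hbs
      _ ≤ ∫ σ in s..b, C / σ ^ n := by
          apply intervalIntegral.integral_mono_on hbs hint.norm
          · apply ContinuousOn.intervalIntegrable
            apply ContinuousOn.div continuousOn_const (by fun_prop)
            intro σ hσ
            rw [Set.uIcc_of_le hbs] at hσ
            have : (1:ℝ) ≤ σ := le_trans hs hσ.1
            exact pow_ne_zero _ (by linarith)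
          · intro σ hσ; exact hb σ (le_trans hs hσ.1)
      _ ≤ C / s ^ (n-1) := integral_inv_pow_bound hC hn hs hbs
  have htend : Tendsto (fun b => ‖f b - f s‖) atTop (𝓝 ‖L - f s‖) :=
    ((hlim.sub tendsto_const_nhds).norm)
  have : ‖L - f s‖ ≤ C / s ^ (n-1) :=
    le_of_tendsto htend (eventually_atTop.2 ⟨s, key⟩)
  rwa [norm_sub_rev] at this

lemma decayBot {E : Type*} [NormedAddCommGroup E] [NormedSpace ℝ E] [CompleteSpace E]
    {f f' : ℝ → E} {L : E} {C : ℝ} {n m : ℕ} (hn : 2 ≤ n) (hm : n = m + 1)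
    (hd : ∀ s, s ≤ -1 → HasDerivAt f (f' s) s)
    (hc : ContinuousOn f' (Iic (-1)))
    (hb : ∀ s, s ≤ -1 → ‖f' s‖ ≤ C / (-s) ^ n)
    (hlim : Tendsto f atBot (𝓝 L)) :
    ∀ s, s ≤ -1 → ‖f s - L‖ ≤ C / (-s) ^ m := by
  have main := decayTop (f := fun σ => f (-σ)) (f' := fun σ => (-1 : ℝ) • f' (-σ)) (L := L) (C := C) hn hm
    (fun σ hσ => (hd (-σ) (by linarith)).scomp σ (hasDerivAt_neg σ))
    (by
      apply ContinuousOn.smul continuousOn_const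
      apply hc.comp continuous_neg.continuousOn
      intro x hx
      simp only [mem_Iic, mem_Ici] at *
      linarith)
    (by
      intro σ hσ
      simp only [neg_smul, one_smul, norm_neg, neg_neg]
      have h := hb (-σ) (by linarith)
      rwa [neg_neg] at h)
    (hlim.comp tendsto_neg_atTop_atBot)
  intro s hs
  have := main (-s) (by linarith)
  simpa using this

lemma bounded_of_tendsto {f : ℝ → Fin 3 → ℝ} (hc : Continuous f) {L1 L2 : Fin 3 → ℝ}
    (h1 : Tendsto f atTop (𝓝 L1)) (h2 : Tendsto f atBot (𝓝 L2)) :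
    ∃ M, ∀ s, ‖f s‖ ≤ M := by
  have e1 : ∀ᶠ s in atTop, ‖f s‖ ≤ ‖L1‖ + 1 :=
    (h1.norm.eventually_le_const (lt_add_one _))
  have e2 : ∀ᶠ s in atBot, ‖f s‖ ≤ ‖L2‖ + 1 :=
    (h2.norm.eventually_le_const (lt_add_one _))
  obtain ⟨a, ha⟩ := eventually_atTop.1 e1
  obtain ⟨b, hb⟩ := eventually_atBot.1 e2
  obtain ⟨C, hC⟩ := (isCompact_Icc (a := b) (b := a)).exists_bound_of_continuousOn hc.continuousOn
  refine ⟨max C (max (‖L1‖ + 1) (‖L2‖ + 1)), fun s => ?_⟩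
  rcases le_total s a with hsa | hsa
  · rcases le_total b s with hbs | hbs
    · exact le_max_of_le_left (hC s ⟨hbs, hsa⟩)
    · exact le_max_of_le_right (le_max_of_le_right (hb s hbs))
  · exact le_max_of_le_right (le_max_of_le_left (ha s hsa))

lemma contOn_aux (a : ℝ) (k : ℕ) {f : ℝ → Fin 3 → ℝ} (hf : Continuous f) :
    ContinuousOn (fun s : ℝ => (a / s^k) • f s) {s : ℝ | s ≠ 0} :=
  (continuousOn_const.div ((continuous_pow k).continuousOn)
    (fun s hs => pow_ne_zero _ hs)).smul hf.continuousOn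

lemma norm_smul_div_le_top {v : Fin 3 → ℝ} {M : ℝ} (hv : ‖v‖ ≤ M) (a : ℝ) (k : ℕ)
    {s : ℝ} (hs : 1 ≤ s) : ‖(a / s^k) • v‖ ≤ |a| * M / s^k := by
  rw [norm_smul, Real.norm_eq_abs, abs_div, abs_pow, abs_of_pos (by linarith : (0:ℝ) < s),
    div_mul_eq_mul_div]
  exact div_le_div_of_nonneg_right (mul_le_mul_of_nonneg_left hv (abs_nonneg a))
    (pow_pos (show (0:ℝ) < s by linarith) k).le

lemma norm_smul_div_le_bot {v : Fin 3 → ℝ} {M : ℝ} (hv : ‖v‖ ≤ M) (a : ℝ) (k : ℕ)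
    {s : ℝ} (hs : s ≤ -1) : ‖(a / s^k) • v‖ ≤ |a| * M / (-s)^k := by
  rw [norm_smul, Real.norm_eq_abs, abs_div, abs_pow, abs_of_neg (by linarith : s < (0:ℝ)),
    div_mul_eq_mul_div]
  exact div_le_div_of_nonneg_right (mul_le_mul_of_nonneg_left hv (abs_nonneg a))
    (pow_pos (show (0:ℝ) < -s by linarith) k).le

lemma tendsto_smul_div_atTop (a : ℝ) {k : ℕ} (hk : k ≠ 0) {f : ℝ → Fin 3 → ℝ} {M : ℝ}
    (hb : ∀ s, ‖f s‖ ≤ M) :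
    Tendsto (fun s : ℝ => (a / s^k) • f s) atTop (𝓝 (0 : Fin 3 → ℝ)) := by
  apply squeeze_zero_norm' (a := fun s => |a| * M / s^k)
  · filter_upwards [eventually_ge_atTop (1:ℝ)] with s hs
    exact norm_smul_div_le_top (hb s) a k hs
  · exact tendsto_const_nhds.div_atTop (tendsto_pow_atTop hk)

lemma tendsto_smul_div_atBot (a : ℝ) {k : ℕ} (hk : k ≠ 0) {f : ℝ → Fin 3 → ℝ} {M : ℝ}
    (hb : ∀ s, ‖f s‖ ≤ M) :
    Tendsto (fun s : ℝ => (a / s^k) • f s) atBot (𝓝 (0 : Fin 3 → ℝ)) := by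
  apply squeeze_zero_norm' (a := fun s => |a| * M / (-s)^k)
  · filter_upwards [eventually_le_atBot (-1:ℝ)] with s hs
    exact norm_smul_div_le_bot (hb s) a k hs
  · have h1 : Tendsto (fun s : ℝ => (-s)^k) atBot atTop :=
      (tendsto_pow_atTop hk).comp tendsto_neg_atBot_atTop
    exact tendsto_const_nhds.div_atTop h1

lemma div_pow_le_div_pow {x s : ℝ} (hx : 0 ≤ x) (hs : 1 ≤ s) {k l : ℕ} (hkl : k ≤ l) :
    x / s^l ≤ x / s^k :=
  div_le_div_of_nonneg_left hx (pow_pos (by linarith) k) (pow_le_pow_right₀ (by linarith) hkl)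

lemma norm3_le (a : Fin 3 → ℝ) : norm3 a ≤ Real.sqrt 3 * ‖a‖ := by
  have h : ∀ i : Fin 3, a i ^ 2 ≤ ‖a‖ ^ 2 := by
    intro i
    have h1 : ‖a i‖ ≤ ‖a‖ := norm_le_pi_norm a i
    have h2 : |a i| ≤ ‖a‖ := h1
    nlinarith [abs_nonneg (a i), sq_abs (a i)]
  have : a 0 ^ 2 + a 1 ^ 2 + a 2 ^ 2 ≤ 3 * ‖a‖ ^ 2 := by
    have := h 0; have := h 1; have := h 2; linarith
  calc norm3 a ≤ Real.sqrt (3 * ‖a‖ ^ 2) := Real.sqrt_le_sqrt this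
    _ = Real.sqrt 3 * ‖a‖ := by
        rw [Real.sqrt_mul (by norm_num : (0:ℝ) ≤ 3), Real.sqrt_sq (norm_nonneg a)]

/-! ### The bootstrap functions -/

/-- round-0 function -/
def Zf (c₀ : ℝ) (T e₂ : ℝ → Fin 3 → ℝ) (s : ℝ) : Fin 3 → ℝ := T s + (2*c₀/s^1) • e₂ s

/-- round-1 function -/
def Wf (c₀ ε : ℝ) (T e₁ e₂ : ℝ → Fin 3 → ℝ) (A : Fin 3 → ℝ) (s : ℝ) : Fin 3 → ℝ :=
  T s + (2*c₀/s^1) • e₂ s + (4*c₀/s^3) • e₁ s - (2*ε*c₀^2/s^2) • A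

/-- corrector -/
def psif (c₀ ε : ℝ) (e₁ e₂ : ℝ → Fin 3 → ℝ) (A : Fin 3 → ℝ) (s : ℝ) : Fin 3 → ℝ :=
  (16*ε*c₀^3/s^5) • e₁ s + (24*c₀/s^5) • e₂ s + (2*(ε*ε)*c₀^4/s^4) • A

/-- round-2 function -/
def Yf (c₀ ε : ℝ) (T e₁ e₂ : ℝ → Fin 3 → ℝ) (A : Fin 3 → ℝ) (s : ℝ) : Fin 3 → ℝ :=
  Wf c₀ ε T e₁ e₂ A s - psif c₀ ε e₁ e₂ A s

section ODE
variable {c₀ ε : ℝ} {T e₁ e₂ : ℝ → Fin 3 → ℝ}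
variable (hT : ∀ s, HasDerivAt T (c₀ • e₁ s) s)
    (he₁ : ∀ s, HasDerivAt e₁ ((-(ε * c₀)) • T s + (s / 2) • e₂ s) s)
    (he₂ : ∀ s, HasDerivAt e₂ ((-(s / 2)) • e₁ s) s)

include hT he₂ in
lemma hZ_deriv {s : ℝ} (hs : s ≠ 0) :
    HasDerivAt (Zf c₀ T e₂) (((-(2*c₀))/s^2) • e₂ s) s := by
  have h := (hT s).add (((hasDerivAt_const_div_pow (2*c₀) 1 hs)).smul (he₂ s))
  refine h.congr_deriv (Eq.symm ?_)
  ext σ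
  simp only [Pi.add_apply, Pi.smul_apply, smul_eq_mul, Pi.neg_apply]
  push_cast
  field_simp
  ring

include hT he₁ he₂ in
lemma hW_deriv (A : Fin 3 → ℝ) {s : ℝ} (hs : s ≠ 0) :
    HasDerivAt (Wf c₀ ε T e₁ e₂ A)
      (((-(4*ε*c₀^2))/s^3) • (T s - A) + ((-(12*c₀))/s^4) • e₁ s) s := by
  have h := (((hT s).add (((hasDerivAt_const_div_pow (2*c₀) 1 hs)).smul (he₂ s))).add
      (((hasDerivAt_const_div_pow (4*c₀) 3 hs)).smul (he₁ s))).sub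
      ((hasDerivAt_const_div_pow (2*ε*c₀^2) 2 hs).smul_const A)
  refine h.congr_deriv (Eq.symm ?_)
  ext σ
  simp only [Wf, Pi.add_apply, Pi.sub_apply, Pi.smul_apply, smul_eq_mul, Pi.neg_apply]
  push_cast
  field_simp
  ring

include hT he₁ he₂ in
lemma hY_deriv (A : Fin 3 → ℝ) {s : ℝ} (hs : s ≠ 0) :
    HasDerivAt (Yf c₀ ε T e₁ e₂ A)
      (((-(4*ε*c₀^2))/s^3) • (Wf c₀ ε T e₁ e₂ A s - A)
        + ((96*ε*c₀^3/s^6) • e₁ s + (16*(ε*ε)*c₀^4/s^5) • T s + (120*c₀/s^6) • e₂ s)) s := by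
  have hψ := (((hasDerivAt_const_div_pow (16*ε*c₀^3) 5 hs).smul (he₁ s)).add
      ((hasDerivAt_const_div_pow (24*c₀) 5 hs).smul (he₂ s))).add
      ((hasDerivAt_const_div_pow (2*(ε*ε)*c₀^4) 4 hs).smul_const A)
  have h := (hW_deriv hT he₁ he₂ A hs).sub hψ
  refine h.congr_deriv (Eq.symm ?_)
  ext σ
  simp only [Wf, Pi.add_apply, Pi.sub_apply, Pi.smul_apply, smul_eq_mul, Pi.neg_apply]
  push_cast
  field_simp
  ring

include hT he₁ he₂ in
lemma energy_const (i : Fin 3) (s : ℝ) :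
    e₁ s i ^ 2 + e₂ s i ^ 2 + ε * T s i ^ 2 = e₁ 0 i ^ 2 + e₂ 0 i ^ 2 + ε * T 0 i ^ 2 := by
  set f : ℝ → ℝ := fun s => e₁ s i ^ 2 + e₂ s i ^ 2 + ε * T s i ^ 2 with hf
  have hd : ∀ x, HasDerivAt f 0 x := by
    intro x
    have h1 := hda_app (he₁ x) i
    have h2 := hda_app (he₂ x) i
    have h3 := hda_app (hT x) i
    simp only [Pi.add_apply, Pi.smul_apply, smul_eq_mul] at h1 h2 h3
    have := ((h1.pow 2).add (h2.pow 2)).add ((h3.pow 2).const_mul ε)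
    refine this.congr_deriv (Eq.symm ?_)
    push_cast
    ring
  exact is_const_of_deriv_eq_zero (fun x => (hd x).differentiableAt)
    (fun x => (hd x).deriv) s 0

include hT he₁ he₂ in
lemma frame_bound (hε : ε = 1 ∨ ε = -1)
    (he₁0 : e₁ 0 = ![1, 0, 0]) (he₂0 : e₂ 0 = ![0, 1, 0]) (hT0 : T 0 = ![0, 0, 1])
    {MT : ℝ} (hMT : ∀ s, ‖T s‖ ≤ MT) :
    ∀ s, ‖e₁ s‖ ≤ Real.sqrt (2 + MT^2) ∧ ‖e₂ s‖ ≤ Real.sqrt (2 + MT^2) := by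
  intro s
  have hMT0 : 0 ≤ MT := le_trans (norm_nonneg _) (hMT 0)
  have key : ∀ i, e₁ s i ^ 2 + e₂ s i ^ 2 ≤ 2 + MT ^ 2 := by
    intro i
    have hcon := energy_const hT he₁ he₂ i s
    have hinit : e₁ 0 i ^ 2 + e₂ 0 i ^ 2 + ε * T 0 i ^ 2 ≤ 1 + |ε| := by
      fin_cases i <;> rcases hε with h|h <;> simp [he₁0, he₂0, hT0, h] <;> norm_num
    have hTle : |T s i| ≤ MT := le_trans (norm_le_pi_norm (T s) i) (hMT s)
    have hTsq : T s i ^ 2 ≤ MT ^ 2 := by nlinarith [abs_nonneg (T s i), sq_abs (T s i)]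
    have habs : |ε| = 1 := by rcases hε with h | h <;> simp [h]
    have h1 : ε * T s i ^2 ≥ -(T s i ^2) := by
      rcases hε with h | h <;> simp [h] <;> nlinarith [sq_nonneg (T s i)]
    nlinarith [hcon]
  constructor <;>
  · rw [pi_norm_le_iff_of_nonneg (Real.sqrt_nonneg _)]
    intro i
    rw [Real.norm_eq_abs, ← Real.sqrt_sq_eq_abs]
    apply Real.sqrt_le_sqrt
    nlinarith [key i, sq_nonneg (e₁ s i), sq_nonneg (e₂ s i)]

include hT he₂ in
lemma G_eq (he₂0 : e₂ 0 = ![0, 1, 0]) (s : ℝ) :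
    Gfun c₀ T s = s • T s + (2 * c₀) • e₂ s := by
  have hF : ∀ σ ∈ Set.uIcc 0 s, HasDerivAt (fun τ => τ • T τ + (2*c₀) • e₂ τ) (T σ) σ := by
    intro σ _
    have h := ((hasDerivAt_id σ).smul (hT σ)).add ((he₂ σ).const_smul (2*c₀))
    refine h.congr_deriv (Eq.symm ?_)
    simp only [id_eq]
    match_scalars <;> ring
  have hTc : Continuous T := by
    rw [continuous_iff_continuousAt]; exact fun x => (hT x).continuousAt
  have hint : IntervalIntegrable T volume 0 s := hTc.intervalIntegrable 0 s
  have := intervalIntegral.integral_eq_sub_of_hasDerivAt hF hint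
  rw [Gfun, this, he₂0, zero_smul, zero_add]
  abel

include hT he₁ he₂ in
lemma sideTop (hc₀ : 0 < c₀) (hε : ε = 1 ∨ ε = -1) {M : ℝ} (hM1 : 1 ≤ M)
    (hTb : ∀ s, ‖T s‖ ≤ M) (he₁b : ∀ s, ‖e₁ s‖ ≤ M) (he₂b : ∀ s, ‖e₂ s‖ ≤ M)
    {A : Fin 3 → ℝ} (hAb : ‖A‖ ≤ M) (hA : Tendsto T atTop (𝓝 A)) :
    ∃ C, 0 < C ∧ ∀ s, 1 ≤ s → ‖Wf c₀ ε T e₁ e₂ A s - A‖ ≤ C / s ^ 4 := by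
  have hM0 : (0:ℝ) < M := lt_of_lt_of_le one_pos hM1
  have hTc : Continuous T := by
    rw [continuous_iff_continuousAt]; exact fun x => (hT x).continuousAt
  have he₁c : Continuous e₁ := by
    rw [continuous_iff_continuousAt]; exact fun x => (he₁ x).continuousAt
  have he₂c : Continuous e₂ := by
    rw [continuous_iff_continuousAt]; exact fun x => (he₂ x).continuousAt
  have hee : ε * ε = 1 := by rcases hε with h|h <;> rw [h] <;> norm_num
  have he1 : |ε| = 1 := by rcases hε with h|h <;> simp [h]
  have hsub1 : (Ici (1:ℝ)) ⊆ {s : ℝ | s ≠ 0} := fun x hx => by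
    simp only [mem_Ici] at hx; simp only [mem_setOf_eq]; intro h; rw [h] at hx; linarith
  -- abs of coefficients
  have ha1 : |(-(2*c₀))| = 2*c₀ := by rw [abs_neg, abs_of_nonneg (by positivity)]
  have ha2 : |(-(4*ε*c₀^2))| = 4*c₀^2 := by
    rw [abs_neg, show (4*ε*c₀^2) = ε*(4*c₀^2) from by ring, abs_mul, he1, one_mul,
      abs_of_nonneg (by positivity)]
  have ha3 : |(-(12*c₀))| = 12*c₀ := by rw [abs_neg, abs_of_nonneg (by positivity)]
  have ha4 : |96*ε*c₀^3| = 96*c₀^3 := by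
    rw [show (96*ε*c₀^3) = ε*(96*c₀^3) from by ring, abs_mul, he1, one_mul,
      abs_of_nonneg (by positivity)]
  have ha5 : |16*(ε*ε)*c₀^4| = 16*c₀^4 := by
    rw [hee, abs_of_nonneg (by positivity : (0:ℝ) ≤ 16*1*c₀^4)]; ring
  have ha6 : |120*c₀| = 120*c₀ := abs_of_nonneg (by positivity)
  have ha7 : |16*ε*c₀^3| = 16*c₀^3 := by
    rw [show (16*ε*c₀^3) = ε*(16*c₀^3) from by ring, abs_mul, he1, one_mul,
      abs_of_nonneg (by positivity)]
  have ha8 : |24*c₀| = 24*c₀ := abs_of_nonneg (by positivity)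
  have ha9 : |2*(ε*ε)*c₀^4| = 2*c₀^4 := by
    rw [hee, abs_of_nonneg (by positivity : (0:ℝ) ≤ 2*1*c₀^4)]; ring
  -- Round 0
  have hZlim : Tendsto (Zf c₀ T e₂) atTop (𝓝 A) := by
    have h0 := hA.add (tendsto_smul_div_atTop (2*c₀) (k := 1) one_ne_zero he₂b)
    rw [add_zero] at h0
    exact h0
  have hZbd : ∀ s, 1 ≤ s → ‖Zf c₀ T e₂ s - A‖ ≤ (2*c₀*M) / s ^ 1 := by
    apply decayTop (n := 2) (by norm_num) rfl
      (fun s hs => hZ_deriv hT he₂ (by intro h; rw [h] at hs; linarith))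
      (((contOn_aux (-(2*c₀)) 2 he₂c).mono hsub1))
      (fun s hs => by
        have t := norm_smul_div_le_top (he₂b s) (-(2*c₀)) 2 hs
        rwa [ha1] at t)
      hZlim
  have hT1 : ∀ s, 1 ≤ s → ‖T s - A‖ ≤ (4*c₀*M) / s ^ 1 := by
    intro s hs
    have hs0 : (0:ℝ) < s := by linarith
    have hdec : T s - A = (Zf c₀ T e₂ s - A) - (2*c₀/s^1) • e₂ s := by
      simp only [Zf]; abel
    rw [hdec]
    have t1 := hZbd s hs
    have t2 := norm_smul_div_le_top (he₂b s) (2*c₀) 1 hs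
    rw [abs_of_nonneg (by positivity : (0:ℝ) ≤ 2*c₀)] at t2
    calc ‖(Zf c₀ T e₂ s - A) - (2*c₀/s^1) • e₂ s‖
        ≤ ‖Zf c₀ T e₂ s - A‖ + ‖(2*c₀/s^1) • e₂ s‖ := norm_sub_le _ _
      _ ≤ (2*c₀*M)/s^1 + (2*c₀*M)/s^1 := add_le_add t1 t2
      _ = (4*c₀*M)/s^1 := by ring
  -- Round 1
  have hWlim : Tendsto (Wf c₀ ε T e₁ e₂ A) atTop (𝓝 A) := by
    have := ((hA.add (tendsto_smul_div_atTop (2*c₀) (k := 1) one_ne_zero he₂b)).add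
      (tendsto_smul_div_atTop (4*c₀) (k := 3) (by norm_num) he₁b)).sub
      (tendsto_smul_div_atTop (2*ε*c₀^2) (k := 2) (by norm_num) (fun _ => hAb))
    simp only [add_zero, sub_zero] at this
    exact this
  have hWbd : ∀ s, 1 ≤ s → ‖Wf c₀ ε T e₁ e₂ A s - A‖ ≤ (16*c₀^3*M + 12*c₀*M) / s ^ 3 := by
    apply decayTop (n := 4) (by norm_num) rfl
      (fun s hs => hW_deriv hT he₁ he₂ A (by intro h; rw [h] at hs; linarith))
      ?_ ?_ hWlim
    · apply ContinuousOn.add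
      · exact ((continuousOn_const.div ((continuous_pow 3).continuousOn)
          (fun s hs => pow_ne_zero _ (hsub1 hs))).smul
          ((hTc.sub continuous_const).continuousOn))
      · exact (contOn_aux (-(12*c₀)) 4 he₁c).mono hsub1
    · intro s hs
      have hs0 : (0:ℝ) < s := by linarith
      have t1 := norm_smul_div_le_top (hT1 s hs) (-(4*ε*c₀^2)) 3 hs
      rw [ha2] at t1
      have e1 : 4*c₀^2 * ((4*c₀*M)/s^1) / s^3 = (16*c₀^3*M)/s^4 := by
        field_simp; ring
      rw [e1] at t1
      have t2 := norm_smul_div_le_top (he₁b s) (-(12*c₀)) 4 hs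
      rw [ha3] at t2
      calc ‖_ + _‖ ≤ _ + _ := norm_add_le _ _
        _ ≤ (16*c₀^3*M)/s^4 + (12*c₀)*M/s^4 := add_le_add t1 t2
        _ = (16*c₀^3*M + 12*c₀*M)/s^4 := by ring
  -- Round 2
  have hYlim : Tendsto (Yf c₀ ε T e₁ e₂ A) atTop (𝓝 A) := by
    have hψ : Tendsto (psif c₀ ε e₁ e₂ A) atTop (𝓝 0) := by
      have := ((tendsto_smul_div_atTop (16*ε*c₀^3) (k := 5) (by norm_num) he₁b).add
        (tendsto_smul_div_atTop (24*c₀) (k := 5) (by norm_num) he₂b)).add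
        (tendsto_smul_div_atTop (2*(ε*ε)*c₀^4) (k := 4) (by norm_num) (fun _ => hAb))
      simp only [add_zero] at this
      exact this
    have := hWlim.sub hψ
    rw [sub_zero] at this
    exact this
  set C3 : ℝ := 4*c₀^2*(16*c₀^3*M + 12*c₀*M) + 96*c₀^3*M + 16*c₀^4*M + 120*c₀*M with hC3
  have hC3pos : 0 < C3 := by rw [hC3]; positivity
  have hYbd : ∀ s, 1 ≤ s → ‖Yf c₀ ε T e₁ e₂ A s - A‖ ≤ C3 / s ^ 4 := by
    apply decayTop (n := 5) (by norm_num) rfl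
      (fun s hs => hY_deriv hT he₁ he₂ A (by intro h; rw [h] at hs; linarith))
      ?_ ?_ hYlim
    · apply ContinuousOn.add
      · refine ContinuousOn.smul (f := fun s : ℝ => (-(4*ε*c₀^2))/s^3) (g := fun s => Wf c₀ ε T e₁ e₂ A s - A) ?_ ?_
        · exact continuousOn_const.div ((continuous_pow 3).continuousOn)
            (fun s hs => pow_ne_zero _ (hsub1 hs))
        · apply ContinuousOn.sub ?_ continuousOn_const
          apply ContinuousOn.sub ?_ ((contOn_aux (2*ε*c₀^2) 2 (continuous_const : Continuous (fun _ : ℝ => A))).mono hsub1)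
          exact (hTc.continuousOn.add ((contOn_aux (2*c₀) 1 he₂c).mono hsub1)).add
            ((contOn_aux (4*c₀) 3 he₁c).mono hsub1)
      · exact (((contOn_aux (96*ε*c₀^3) 6 he₁c).mono hsub1).add
          ((contOn_aux (16*(ε*ε)*c₀^4) 5 hTc).mono hsub1)).add
          ((contOn_aux (120*c₀) 6 he₂c).mono hsub1)
    · intro s hs
      have hs0 : (0:ℝ) < s := by linarith
      have t1 := norm_smul_div_le_top (hWbd s hs) (-(4*ε*c₀^2)) 3 hs
      rw [ha2] at t1
      have e1 : 4*c₀^2 * ((16*c₀^3*M + 12*c₀*M)/s^3) / s^3 = (4*c₀^2*(16*c₀^3*M + 12*c₀*M))/s^6 := by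
        field_simp
      rw [e1] at t1
      have t1' : ‖((-(4*ε*c₀^2))/s^3) • (Wf c₀ ε T e₁ e₂ A s - A)‖
          ≤ (4*c₀^2*(16*c₀^3*M + 12*c₀*M))/s^5 :=
        t1.trans (div_pow_le_div_pow (by positivity) hs (by norm_num))
      have t2 := norm_smul_div_le_top (he₁b s) (96*ε*c₀^3) 6 hs
      rw [ha4] at t2
      have t2' : ‖(96*ε*c₀^3/s^6) • e₁ s‖ ≤ (96*c₀^3*M)/s^5 := by
        refine t2.trans ?_
        have : 96*c₀^3*M/s^6 ≤ 96*c₀^3*M/s^5 := div_pow_le_div_pow (by positivity) hs (by norm_num)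
        linarith [this]
      have t3 := norm_smul_div_le_top (hTb s) (16*(ε*ε)*c₀^4) 5 hs
      rw [ha5] at t3
      have t4 := norm_smul_div_le_top (he₂b s) (120*c₀) 6 hs
      rw [ha6] at t4
      have t4' : ‖(120*c₀/s^6) • e₂ s‖ ≤ (120*c₀*M)/s^5 := by
        refine t4.trans ?_
        exact div_pow_le_div_pow (by positivity) hs (by norm_num)
      calc ‖_ + (_ + _ + _)‖ ≤ ‖_‖ + ‖_ + _ + _‖ := norm_add_le _ _
        _ ≤ ‖_‖ + (‖_‖ + ‖_‖ + ‖_‖) := by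
            gcongr
            exact (norm_add_le _ _).trans (add_le_add_left (norm_add_le _ _) _)
        _ ≤ (4*c₀^2*(16*c₀^3*M + 12*c₀*M))/s^5
            + ((96*c₀^3*M)/s^5 + (16*c₀^4)*M/s^5 + (120*c₀*M)/s^5) := by
            exact add_le_add t1' (add_le_add (add_le_add t2' t3) t4')
        _ = C3 / s^5 := by rw [hC3]; ring
  -- conclusion
  refine ⟨C3 + 16*c₀^3*M + 24*c₀*M + 2*c₀^4*M, by positivity, ?_⟩
  intro s hs
  have hs0 : (0:ℝ) < s := by linarith
  have hdec : Wf c₀ ε T e₁ e₂ A s - A = (Yf c₀ ε T e₁ e₂ A s - A) + psif c₀ ε e₁ e₂ A s := by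
    simp only [Yf]; abel
  rw [hdec]
  have t1 := hYbd s hs
  have p1 := norm_smul_div_le_top (he₁b s) (16*ε*c₀^3) 5 hs
  rw [ha7] at p1
  have p2 := norm_smul_div_le_top (he₂b s) (24*c₀) 5 hs
  rw [ha8] at p2
  have p3 := norm_smul_div_le_top (hAb) (2*(ε*ε)*c₀^4) 4 hs
  rw [ha9] at p3
  have p1' : ‖(16*ε*c₀^3/s^5) • e₁ s‖ ≤ (16*c₀^3*M)/s^4 :=
    p1.trans (div_pow_le_div_pow (by positivity) hs (by norm_num))
  have p2' : ‖(24*c₀/s^5) • e₂ s‖ ≤ (24*c₀*M)/s^4 :=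
    p2.trans (div_pow_le_div_pow (by positivity) hs (by norm_num))
  calc ‖(Yf c₀ ε T e₁ e₂ A s - A) + psif c₀ ε e₁ e₂ A s‖
      ≤ ‖Yf c₀ ε T e₁ e₂ A s - A‖ + ‖psif c₀ ε e₁ e₂ A s‖ := norm_add_le _ _
    _ ≤ C3/s^4 + ((16*c₀^3*M)/s^4 + (24*c₀*M)/s^4 + (2*c₀^4)*M/s^4) := by
        apply add_le_add t1
        simp only [psif]
        exact (norm_add_le _ _).trans (add_le_add ((norm_add_le _ _).trans (add_le_add p1' p2')) p3)
    _ = (C3 + 16*c₀^3*M + 24*c₀*M + 2*c₀^4*M) / s^4 := by ring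

include hT he₁ he₂ in
lemma sideBot (hc₀ : 0 < c₀) (hε : ε = 1 ∨ ε = -1) {M : ℝ} (hM1 : 1 ≤ M)
    (hTb : ∀ s, ‖T s‖ ≤ M) (he₁b : ∀ s, ‖e₁ s‖ ≤ M) (he₂b : ∀ s, ‖e₂ s‖ ≤ M)
    {A : Fin 3 → ℝ} (hAb : ‖A‖ ≤ M) (hA : Tendsto T atBot (𝓝 A)) :
    ∃ C, 0 < C ∧ ∀ s, s ≤ -1 → ‖Wf c₀ ε T e₁ e₂ A s - A‖ ≤ C / (-s) ^ 4 := by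
  have hM0 : (0:ℝ) < M := lt_of_lt_of_le one_pos hM1
  have hTc : Continuous T := by
    rw [continuous_iff_continuousAt]; exact fun x => (hT x).continuousAt
  have he₁c : Continuous e₁ := by
    rw [continuous_iff_continuousAt]; exact fun x => (he₁ x).continuousAt
  have he₂c : Continuous e₂ := by
    rw [continuous_iff_continuousAt]; exact fun x => (he₂ x).continuousAt
  have hee : ε * ε = 1 := by rcases hε with h|h <;> rw [h] <;> norm_num
  have he1 : |ε| = 1 := by rcases hε with h|h <;> simp [h]
  have hsub1 : (Iic (-1:ℝ)) ⊆ {s : ℝ | s ≠ 0} := fun x hx => by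
    simp only [mem_Iic] at hx; simp only [mem_setOf_eq]; intro h; rw [h] at hx; linarith
  -- abs of coefficients
  have ha1 : |(-(2*c₀))| = 2*c₀ := by rw [abs_neg, abs_of_nonneg (by positivity)]
  have ha2 : |(-(4*ε*c₀^2))| = 4*c₀^2 := by
    rw [abs_neg, show (4*ε*c₀^2) = ε*(4*c₀^2) from by ring, abs_mul, he1, one_mul,
      abs_of_nonneg (by positivity)]
  have ha3 : |(-(12*c₀))| = 12*c₀ := by rw [abs_neg, abs_of_nonneg (by positivity)]
  have ha4 : |96*ε*c₀^3| = 96*c₀^3 := by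
    rw [show (96*ε*c₀^3) = ε*(96*c₀^3) from by ring, abs_mul, he1, one_mul,
      abs_of_nonneg (by positivity)]
  have ha5 : |16*(ε*ε)*c₀^4| = 16*c₀^4 := by
    rw [hee, abs_of_nonneg (by positivity : (0:ℝ) ≤ 16*1*c₀^4)]; ring
  have ha6 : |120*c₀| = 120*c₀ := abs_of_nonneg (by positivity)
  have ha7 : |16*ε*c₀^3| = 16*c₀^3 := by
    rw [show (16*ε*c₀^3) = ε*(16*c₀^3) from by ring, abs_mul, he1, one_mul,
      abs_of_nonneg (by positivity)]
  have ha8 : |24*c₀| = 24*c₀ := abs_of_nonneg (by positivity)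
  have ha9 : |2*(ε*ε)*c₀^4| = 2*c₀^4 := by
    rw [hee, abs_of_nonneg (by positivity : (0:ℝ) ≤ 2*1*c₀^4)]; ring
  -- Round 0
  have hZlim : Tendsto (Zf c₀ T e₂) atBot (𝓝 A) := by
    have h0 := hA.add (tendsto_smul_div_atBot (2*c₀) (k := 1) one_ne_zero he₂b)
    rw [add_zero] at h0
    exact h0
  have hZbd : ∀ s, s ≤ -1 → ‖Zf c₀ T e₂ s - A‖ ≤ (2*c₀*M) / (-s) ^ 1 := by
    apply decayBot (n := 2) (by norm_num) rfl
      (fun s hs => hZ_deriv hT he₂ (by intro h; rw [h] at hs; linarith))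
      (((contOn_aux (-(2*c₀)) 2 he₂c).mono hsub1))
      (fun s hs => by
        have t := norm_smul_div_le_bot (he₂b s) (-(2*c₀)) 2 hs
        rwa [ha1] at t)
      hZlim
  have hT1 : ∀ s, s ≤ -1 → ‖T s - A‖ ≤ (4*c₀*M) / (-s) ^ 1 := by
    intro s hs
    have hs0 : s < (0:ℝ) := by linarith
    have hs1 : (1:ℝ) ≤ -s := by linarith
    have hdec : T s - A = (Zf c₀ T e₂ s - A) - (2*c₀/s^1) • e₂ s := by
      simp only [Zf]; abel
    rw [hdec]
    have t1 := hZbd s hs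
    have t2 := norm_smul_div_le_bot (he₂b s) (2*c₀) 1 hs
    rw [abs_of_nonneg (by positivity : (0:ℝ) ≤ 2*c₀)] at t2
    calc ‖(Zf c₀ T e₂ s - A) - (2*c₀/s^1) • e₂ s‖
        ≤ ‖Zf c₀ T e₂ s - A‖ + ‖(2*c₀/s^1) • e₂ s‖ := norm_sub_le _ _
      _ ≤ (2*c₀*M)/(-s)^1 + (2*c₀*M)/(-s)^1 := add_le_add t1 t2
      _ = (4*c₀*M)/(-s)^1 := by ring
  -- Round 1
  have hWlim : Tendsto (Wf c₀ ε T e₁ e₂ A) atBot (𝓝 A) := by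
    have := ((hA.add (tendsto_smul_div_atBot (2*c₀) (k := 1) one_ne_zero he₂b)).add
      (tendsto_smul_div_atBot (4*c₀) (k := 3) (by norm_num) he₁b)).sub
      (tendsto_smul_div_atBot (2*ε*c₀^2) (k := 2) (by norm_num) (fun _ => hAb))
    simp only [add_zero, sub_zero] at this
    exact this
  have hWbd : ∀ s, s ≤ -1 → ‖Wf c₀ ε T e₁ e₂ A s - A‖ ≤ (16*c₀^3*M + 12*c₀*M) / (-s) ^ 3 := by
    apply decayBot (n := 4) (by norm_num) rfl
      (fun s hs => hW_deriv hT he₁ he₂ A (by intro h; rw [h] at hs; linarith))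
      ?_ ?_ hWlim
    · apply ContinuousOn.add
      · exact ((continuousOn_const.div ((continuous_pow 3).continuousOn)
          (fun s hs => pow_ne_zero _ (hsub1 hs))).smul
          ((hTc.sub continuous_const).continuousOn))
      · exact (contOn_aux (-(12*c₀)) 4 he₁c).mono hsub1
    · intro s hs
      have hs0 : s < (0:ℝ) := by linarith
      have hs1 : (1:ℝ) ≤ -s := by linarith
      have t1 := norm_smul_div_le_bot (hT1 s hs) (-(4*ε*c₀^2)) 3 hs
      rw [ha2] at t1
      have e1 : 4*c₀^2 * ((4*c₀*M)/(-s)^1) / (-s)^3 = (16*c₀^3*M)/(-s)^4 := by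
        have hsne : s ≠ 0 := by linarith
        field_simp
        ring
      rw [e1] at t1
      have t2 := norm_smul_div_le_bot (he₁b s) (-(12*c₀)) 4 hs
      rw [ha3] at t2
      calc ‖_ + _‖ ≤ _ + _ := norm_add_le _ _
        _ ≤ (16*c₀^3*M)/(-s)^4 + (12*c₀)*M/(-s)^4 := add_le_add t1 t2
        _ = (16*c₀^3*M + 12*c₀*M)/(-s)^4 := by ring
  -- Round 2
  have hYlim : Tendsto (Yf c₀ ε T e₁ e₂ A) atBot (𝓝 A) := by
    have hψ : Tendsto (psif c₀ ε e₁ e₂ A) atBot (𝓝 0) := by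
      have := ((tendsto_smul_div_atBot (16*ε*c₀^3) (k := 5) (by norm_num) he₁b).add
        (tendsto_smul_div_atBot (24*c₀) (k := 5) (by norm_num) he₂b)).add
        (tendsto_smul_div_atBot (2*(ε*ε)*c₀^4) (k := 4) (by norm_num) (fun _ => hAb))
      simp only [add_zero] at this
      exact this
    have := hWlim.sub hψ
    rw [sub_zero] at this
    exact this
  set C3 : ℝ := 4*c₀^2*(16*c₀^3*M + 12*c₀*M) + 96*c₀^3*M + 16*c₀^4*M + 120*c₀*M with hC3
  have hC3pos : 0 < C3 := by rw [hC3]; positivity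
  have hYbd : ∀ s, s ≤ -1 → ‖Yf c₀ ε T e₁ e₂ A s - A‖ ≤ C3 / (-s) ^ 4 := by
    apply decayBot (n := 5) (by norm_num) rfl
      (fun s hs => hY_deriv hT he₁ he₂ A (by intro h; rw [h] at hs; linarith))
      ?_ ?_ hYlim
    · apply ContinuousOn.add
      · refine ContinuousOn.smul (f := fun s : ℝ => (-(4*ε*c₀^2))/s^3) (g := fun s => Wf c₀ ε T e₁ e₂ A s - A) ?_ ?_
        · exact continuousOn_const.div ((continuous_pow 3).continuousOn)
            (fun s hs => pow_ne_zero _ (hsub1 hs))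
        · apply ContinuousOn.sub ?_ continuousOn_const
          apply ContinuousOn.sub ?_ ((contOn_aux (2*ε*c₀^2) 2 (continuous_const : Continuous (fun _ : ℝ => A))).mono hsub1)
          exact (hTc.continuousOn.add ((contOn_aux (2*c₀) 1 he₂c).mono hsub1)).add
            ((contOn_aux (4*c₀) 3 he₁c).mono hsub1)
      · exact (((contOn_aux (96*ε*c₀^3) 6 he₁c).mono hsub1).add
          ((contOn_aux (16*(ε*ε)*c₀^4) 5 hTc).mono hsub1)).add
          ((contOn_aux (120*c₀) 6 he₂c).mono hsub1)
    · intro s hs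
      have hs0 : s < (0:ℝ) := by linarith
      have hs1 : (1:ℝ) ≤ -s := by linarith
      have t1 := norm_smul_div_le_bot (hWbd s hs) (-(4*ε*c₀^2)) 3 hs
      rw [ha2] at t1
      have e1 : 4*c₀^2 * ((16*c₀^3*M + 12*c₀*M)/(-s)^3) / (-s)^3 = (4*c₀^2*(16*c₀^3*M + 12*c₀*M))/(-s)^6 := by
        have hsne : s ≠ 0 := by linarith
        field_simp
      rw [e1] at t1
      have t1' : ‖((-(4*ε*c₀^2))/s^3) • (Wf c₀ ε T e₁ e₂ A s - A)‖
          ≤ (4*c₀^2*(16*c₀^3*M + 12*c₀*M))/(-s)^5 :=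
        t1.trans (div_pow_le_div_pow (by positivity) (show (1:ℝ) ≤ -s by linarith) (by norm_num))
      have t2 := norm_smul_div_le_bot (he₁b s) (96*ε*c₀^3) 6 hs
      rw [ha4] at t2
      have t2' : ‖(96*ε*c₀^3/s^6) • e₁ s‖ ≤ (96*c₀^3*M)/(-s)^5 := by
        refine t2.trans ?_
        exact div_pow_le_div_pow (by positivity) (show (1:ℝ) ≤ -s by linarith) (by norm_num)
      have t3 := norm_smul_div_le_bot (hTb s) (16*(ε*ε)*c₀^4) 5 hs
      rw [ha5] at t3
      have t4 := norm_smul_div_le_bot (he₂b s) (120*c₀) 6 hs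
      rw [ha6] at t4
      have t4' : ‖(120*c₀/s^6) • e₂ s‖ ≤ (120*c₀*M)/(-s)^5 := by
        refine t4.trans ?_
        exact div_pow_le_div_pow (by positivity) (show (1:ℝ) ≤ -s by linarith) (by norm_num)
      calc ‖_ + (_ + _ + _)‖ ≤ ‖_‖ + ‖_ + _ + _‖ := norm_add_le _ _
        _ ≤ ‖_‖ + (‖_‖ + ‖_‖ + ‖_‖) := by
            gcongr
            exact (norm_add_le _ _).trans (add_le_add_left (norm_add_le _ _) _)
        _ ≤ (4*c₀^2*(16*c₀^3*M + 12*c₀*M))/(-s)^5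
            + ((96*c₀^3*M)/(-s)^5 + (16*c₀^4)*M/(-s)^5 + (120*c₀*M)/(-s)^5) := by
            exact add_le_add t1' (add_le_add (add_le_add t2' t3) t4')
        _ = C3 / (-s)^5 := by rw [hC3]; ring
  -- conclusion
  refine ⟨C3 + 16*c₀^3*M + 24*c₀*M + 2*c₀^4*M, by positivity, ?_⟩
  intro s hs
  have hs0 : s < (0:ℝ) := by linarith
  have hs1 : (1:ℝ) ≤ -s := by linarith
  have hdec : Wf c₀ ε T e₁ e₂ A s - A = (Yf c₀ ε T e₁ e₂ A s - A) + psif c₀ ε e₁ e₂ A s := by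
    simp only [Yf]; abel
  rw [hdec]
  have t1 := hYbd s hs
  have p1 := norm_smul_div_le_bot (he₁b s) (16*ε*c₀^3) 5 hs
  rw [ha7] at p1
  have p2 := norm_smul_div_le_bot (he₂b s) (24*c₀) 5 hs
  rw [ha8] at p2
  have p3 := norm_smul_div_le_bot (hAb) (2*(ε*ε)*c₀^4) 4 hs
  rw [ha9] at p3
  have p1' : ‖(16*ε*c₀^3/s^5) • e₁ s‖ ≤ (16*c₀^3*M)/(-s)^4 :=
    p1.trans (div_pow_le_div_pow (by positivity) (show (1:ℝ) ≤ -s by linarith) (by norm_num))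
  have p2' : ‖(24*c₀/s^5) • e₂ s‖ ≤ (24*c₀*M)/(-s)^4 :=
    p2.trans (div_pow_le_div_pow (by positivity) (show (1:ℝ) ≤ -s by linarith) (by norm_num))
  calc ‖(Yf c₀ ε T e₁ e₂ A s - A) + psif c₀ ε e₁ e₂ A s‖
      ≤ ‖Yf c₀ ε T e₁ e₂ A s - A‖ + ‖psif c₀ ε e₁ e₂ A s‖ := norm_add_le _ _
    _ ≤ C3/(-s)^4 + ((16*c₀^3*M)/(-s)^4 + (24*c₀*M)/(-s)^4 + (2*c₀^4)*M/(-s)^4) := by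
        apply add_le_add t1
        simp only [psif]
        exact (norm_add_le _ _).trans (add_le_add ((norm_add_le _ _).trans (add_le_add p1' p2')) p3)
    _ = (C3 + 16*c₀^3*M + 24*c₀*M + 2*c₀^4*M) / (-s)^4 := by ring

end ODE

theorem stmt3 (c₀ ε : ℝ) (hc₀ : 0 < c₀) (hε : ε = 1 ∨ ε = -1)
    (T e₁ e₂ : ℝ → Fin 3 → ℝ)
    (hT : ∀ s, HasDerivAt T (c₀ • e₁ s) s)
    (he₁ : ∀ s, HasDerivAt e₁ ((-(ε * c₀)) • T s + (s / 2) • e₂ s) s)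
    (he₂ : ∀ s, HasDerivAt e₂ ((-(s / 2)) • e₁ s) s)
    (hT0 : T 0 = ![0, 0, 1])
    (he₁0 : e₁ 0 = ![1, 0, 0])
    (he₂0 : e₂ 0 = ![0, 1, 0])
    (A1 A2 : Fin 3 → ℝ)
    (hA1 : Tendsto T atTop (𝓝 A1)) (hA2 : Tendsto T atBot (𝓝 A2)) :
    ∃ C : ℝ, 0 < C ∧
      (∀ s : ℝ, 1 ≤ s →
        norm3 (Gfun c₀ T s - (s + 2 * ε * c₀ ^ 2 / s) • A1 + (4 * c₀ / s ^ 2) • e₁ s)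
          ≤ C / |s| ^ 3) ∧
      (∀ s : ℝ, s ≤ -1 →
        norm3 (Gfun c₀ T s - (s + 2 * ε * c₀ ^ 2 / s) • A2 + (4 * c₀ / s ^ 2) • e₁ s)
          ≤ C / |s| ^ 3) := by
  have hTc : Continuous T := by
    rw [continuous_iff_continuousAt]; exact fun x => (hT x).continuousAt
  obtain ⟨MT, hMT⟩ := bounded_of_tendsto hTc hA1 hA2
  have hfb := frame_bound hT he₁ he₂ hε he₁0 he₂0 hT0 hMT
  set M := max 1 (max MT (Real.sqrt (2 + MT^2))) with hM
  have hM1 : 1 ≤ M := le_max_left _ _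
  have hTb : ∀ s, ‖T s‖ ≤ M := fun s =>
    (hMT s).trans ((le_max_left MT _).trans (le_max_right 1 _))
  have he₁b : ∀ s, ‖e₁ s‖ ≤ M := fun s =>
    (hfb s).1.trans ((le_max_right MT _).trans (le_max_right 1 _))
  have he₂b : ∀ s, ‖e₂ s‖ ≤ M := fun s =>
    (hfb s).2.trans ((le_max_right MT _).trans (le_max_right 1 _))
  have hA1b : ‖A1‖ ≤ M := le_of_tendsto hA1.norm (Filter.Eventually.of_forall hTb)
  have hA2b : ‖A2‖ ≤ M := le_of_tendsto hA2.norm (Filter.Eventually.of_forall hTb)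
  obtain ⟨C1, hC1p, hC1⟩ := sideTop hT he₁ he₂ hc₀ hε hM1 hTb he₁b he₂b hA1b hA1
  obtain ⟨C2, hC2p, hC2⟩ := sideBot hT he₁ he₂ hc₀ hε hM1 hTb he₁b he₂b hA2b hA2
  refine ⟨Real.sqrt 3 * (C1 + C2), by positivity, ?_, ?_⟩
  · intro s hs
    have hs0 : (0:ℝ) < s := by linarith
    have hsne : s ≠ 0 := ne_of_gt hs0
    have key : Gfun c₀ T s - (s + 2 * ε * c₀ ^ 2 / s) • A1 + (4 * c₀ / s ^ 2) • e₁ s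
        = s • (Wf c₀ ε T e₁ e₂ A1 s - A1) := by
      rw [G_eq hT he₂ he₂0 s]
      simp only [Wf, smul_sub, smul_add]
      match_scalars <;> field_simp <;> ring
    rw [key]
    have h1 : ‖s • (Wf c₀ ε T e₁ e₂ A1 s - A1)‖ = s * ‖Wf c₀ ε T e₁ e₂ A1 s - A1‖ := by
      rw [norm_smul, Real.norm_eq_abs, abs_of_pos hs0]
    calc norm3 (s • (Wf c₀ ε T e₁ e₂ A1 s - A1))
        ≤ Real.sqrt 3 * ‖s • (Wf c₀ ε T e₁ e₂ A1 s - A1)‖ := norm3_le _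
      _ = Real.sqrt 3 * (s * ‖Wf c₀ ε T e₁ e₂ A1 s - A1‖) := by rw [h1]
      _ ≤ Real.sqrt 3 * (s * (C1 / s^4)) :=
          mul_le_mul_of_nonneg_left (mul_le_mul_of_nonneg_left (hC1 s hs) hs0.le)
            (Real.sqrt_nonneg 3)
      _ ≤ Real.sqrt 3 * (C1 + C2) / |s|^3 := by
          rw [abs_of_pos hs0]
          have e : s * (C1 / s^4) = C1 / s^3 := by field_simp
          rw [e, mul_div_assoc]
          exact mul_le_mul_of_nonneg_left
            (div_le_div_of_nonneg_right (by linarith) (pow_pos hs0 3).le) (Real.sqrt_nonneg 3)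
  · intro s hs
    have hs0 : s < (0:ℝ) := by linarith
    have hsne : s ≠ 0 := ne_of_lt hs0
    have key : Gfun c₀ T s - (s + 2 * ε * c₀ ^ 2 / s) • A2 + (4 * c₀ / s ^ 2) • e₁ s
        = s • (Wf c₀ ε T e₁ e₂ A2 s - A2) := by
      rw [G_eq hT he₂ he₂0 s]
      simp only [Wf, smul_sub, smul_add]
      match_scalars <;> field_simp <;> ring
    rw [key]
    have h1 : ‖s • (Wf c₀ ε T e₁ e₂ A2 s - A2)‖ = (-s) * ‖Wf c₀ ε T e₁ e₂ A2 s - A2‖ := by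
      rw [norm_smul, Real.norm_eq_abs, abs_of_neg hs0]
    calc norm3 (s • (Wf c₀ ε T e₁ e₂ A2 s - A2))
        ≤ Real.sqrt 3 * ‖s • (Wf c₀ ε T e₁ e₂ A2 s - A2)‖ := norm3_le _
      _ = Real.sqrt 3 * ((-s) * ‖Wf c₀ ε T e₁ e₂ A2 s - A2‖) := by rw [h1]
      _ ≤ Real.sqrt 3 * ((-s) * (C2 / (-s)^4)) :=
          mul_le_mul_of_nonneg_left (mul_le_mul_of_nonneg_left (hC2 s hs) (by linarith))
            (Real.sqrt_nonneg 3)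
      _ ≤ Real.sqrt 3 * (C1 + C2) / |s|^3 := by
          rw [abs_of_neg hs0]
          have e : (-s) * (C2 / (-s)^4) = C2 / (-s)^3 := by
            have h2 : (-s) ≠ 0 := by intro h; apply hsne; linarith [neg_eq_zero.1 h]
            field_simp
          rw [e, mul_div_assoc]
          exact mul_le_mul_of_nonneg_left
            (div_le_div_of_nonneg_right (by linarith) (pow_pos (by linarith : (0:ℝ) < -s) 3).le)
            (Real.sqrt_nonneg 3)

end
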